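/- Let ν > 2, s² > 0, v* > 0, and m, m* ∈ ℝ. Then the cross-entropy of the location-scale Student-t density relative to the Gaussian log-loss evaluates to: ∫_ℝ T(y; ν, m, s²) · (−ln N(y; m*, v*)) dy = (1/2)·ln(2πv*) + (1/(2v*))·((m − m*)² + s²·ν/(ν − 2)). -/

import Mathlib

open Real MeasureTheory Matrix

/-- Univariate Gaussian density `N(y; m, v)` with mean `m`, variance `v`. -/
noncomputable def gauss1 (y m v : ℝ) : ℝ :=
  (2 * π * v) ^ (-(1 : ℝ) / 2) * Real.exp (-((y - m) ^ 2) / (2 * v))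

/-- Multivariate Gaussian density in precision form: `N(θ; μ, P⁻¹)` with precision matrix `P`. -/
noncomputable def gaussND {ι : Type*} [Fintype ι] [DecidableEq ι]
    (θ μ : ι → ℝ) (P : Matrix ι ι ℝ) : ℝ :=
  (2 * π) ^ (-(Fintype.card ι : ℝ) / 2) * P.det ^ ((1 : ℝ) / 2) *
    Real.exp (-(1 / 2) * ((θ - μ) ⬝ᵥ (P *ᵥ (θ - μ))))

/-- Gamma density `G(τ; α, β)` with shape `α` and rate `β`. -/
noncomputable def gammaPdf (τ α β : ℝ) : ℝ :=
  β ^ α / Real.Gamma α * τ ^ (α - 1) * Real.exp (-β * τ)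

/-- Normal-Gamma density `NG(θ, τ; μ, Λ, α, β) = N(θ; μ, (τΛ)⁻¹) · G(τ; α, β)`. -/
noncomputable def normalGamma {ι : Type*} [Fintype ι] [DecidableEq ι]
    (θ : ι → ℝ) (τ : ℝ) (μ : ι → ℝ) (Λ : Matrix ι ι ℝ) (α β : ℝ) : ℝ :=
  gaussND θ μ (τ • Λ) * gammaPdf τ α β

/-- Location-scale Student-t density `T(y; ν, m, s²)`. -/
noncomputable def studentT (y ν m s2 : ℝ) : ℝ :=
  Real.Gamma ((ν + 1) / 2) / (Real.sqrt (π * ν * s2) * Real.Gamma (ν / 2)) *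
    (1 + (y - m) ^ 2 / (ν * s2)) ^ (-((ν + 1) / 2))

/-- Multivariate location-scale Student-t density `T_D(θ; ν, μ, Σ)`. -/
noncomputable def multiStudentT {ι : Type*} [Fintype ι] [DecidableEq ι]
    (θ : ι → ℝ) (ν : ℝ) (μ : ι → ℝ) (S : Matrix ι ι ℝ) : ℝ :=
  Real.Gamma ((ν + Fintype.card ι) / 2) /
      (Real.Gamma (ν / 2) * (ν * π) ^ ((Fintype.card ι : ℝ) / 2) * S.det ^ ((1 : ℝ) / 2)) *
    (1 + (θ - μ) ⬝ᵥ (S⁻¹ *ᵥ (θ - μ)) / ν) ^ (-((ν + Fintype.card ι) / 2))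

/-- The digamma function: the derivative of `ln ∘ Γ`. -/
noncomputable def digamma (x : ℝ) : ℝ := deriv (fun t => Real.log (Real.Gamma t)) x

/-- The Beta function `B(a, b) = Γ(a)Γ(b)/Γ(a+b)`. -/
noncomputable def betaFn (a b : ℝ) : ℝ := Real.Gamma a * Real.Gamma b / Real.Gamma (a + b)

open Set

private lemma beta_real {a b : ℝ} (ha : 0 < a) (hb : 0 < b) :
    ∫ x in Ioo (0:ℝ) 1, x ^ (a-1) * (1-x) ^ (b-1) =
      Real.Gamma a * Real.Gamma b / Real.Gamma (a+b) := by
  have key : Complex.Gamma a * Complex.Gamma b =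
      Complex.Gamma (a+b) * Complex.betaIntegral a b := by
    have := Complex.Gamma_mul_Gamma_eq_betaIntegral
      (s := (a:ℂ)) (t := (b:ℂ)) (by simpa using ha) (by simpa using hb)
    simpa using this
  have hbeta : Complex.betaIntegral a b =
      ((∫ x in Ioo (0:ℝ) 1, x ^ (a-1) * (1-x) ^ (b-1) : ℝ) : ℂ) := by
    rw [Complex.betaIntegral]
    rw [intervalIntegral.integral_of_le zero_le_one]
    calc (∫ x in Ioc (0:ℝ) 1, (x:ℂ) ^ ((a:ℂ)-1) * (1-(x:ℂ)) ^ ((b:ℂ)-1))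
        = ∫ x in Ioc (0:ℝ) 1, ((x ^ (a-1) * (1-x) ^ (b-1) : ℝ) : ℂ) := by
          refine setIntegral_congr_fun measurableSet_Ioc fun x hx => ?_
          have hx0 : (0:ℝ) ≤ x := le_of_lt hx.1
          have hx1 : (0:ℝ) ≤ 1 - x := by linarith [hx.2]
          rw [show ((a:ℂ) - 1) = ((a-1 : ℝ) : ℂ) by push_cast; ring,
            show ((b:ℂ) - 1) = ((b-1 : ℝ) : ℂ) by push_cast; ring,
            show (1 - (x:ℂ)) = ((1 - x : ℝ) : ℂ) by push_cast; ring,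
            ← Complex.ofReal_cpow hx0, ← Complex.ofReal_cpow hx1]
          push_cast
          ring
      _ = ((∫ x in Ioc (0:ℝ) 1, x ^ (a-1) * (1-x) ^ (b-1) : ℝ) : ℂ) := integral_ofReal
      _ = ((∫ x in Ioo (0:ℝ) 1, x ^ (a-1) * (1-x) ^ (b-1) : ℝ) : ℂ) := by
          rw [integral_Ioc_eq_integral_Ioo]
  rw [hbeta, Complex.Gamma_ofReal, Complex.Gamma_ofReal, ← Complex.ofReal_add,
    Complex.Gamma_ofReal, ← Complex.ofReal_mul, ← Complex.ofReal_mul] at key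
  have := Complex.ofReal_inj.mp key
  have hG : Real.Gamma (a+b) ≠ 0 := (Real.Gamma_pos_of_pos (by linarith)).ne'
  field_simp [this]
  rw [this]; ring

private lemma beta_Ioi {a p : ℝ} (ha : 0 < a) (hap : a < p) :
    ∫ x in Ioi (0:ℝ), x ^ (a-1) * (1+x) ^ (-p) =
      Real.Gamma a * Real.Gamma (p-a) / Real.Gamma p := by
  have himg : (fun t : ℝ => t/(1-t)) '' Ioo 0 1 = Ioi 0 := by
    ext x
    constructor
    · rintro ⟨t, ht, rfl⟩
      exact div_pos ht.1 (by linarith [ht.2])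
    · intro hx
      have hx' : (0:ℝ) < x := hx
      have h1 : (1:ℝ) + x ≠ 0 := by linarith
      refine ⟨x/(1+x), ⟨div_pos hx' (by linarith), ?_⟩, ?_⟩
      · rw [div_lt_one (by linarith)]; linarith
      · show x/(1+x) / (1 - x/(1+x)) = x
        rw [show (1:ℝ) - x/(1+x) = 1/(1+x) by field_simp; ring]
        field_simp
  have hd : ∀ t ∈ Ioo (0:ℝ) 1, HasDerivWithinAt (fun t : ℝ => t/(1-t))
      (1/(1-t)^2) (Ioo 0 1) t := by
    intro t ht
    have h1 : (1:ℝ) - t ≠ 0 := by linarith [ht.2]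
    have := (hasDerivAt_id t).div ((hasDerivAt_const t (1:ℝ)).sub (hasDerivAt_id t)) h1
    refine this.hasDerivWithinAt.congr_deriv ?_
    simp only [Pi.sub_apply, id]
    field_simp
    ring
  have hinj : InjOn (fun t : ℝ => t/(1-t)) (Ioo 0 1) := by
    intro x hx y hy h
    have hx1 : (1:ℝ) - x ≠ 0 := by linarith [hx.2]
    have hy1 : (1:ℝ) - y ≠ 0 := by linarith [hy.2]
    field_simp at h
    nlinarith [h]
  have key := integral_image_eq_integral_abs_deriv_smul measurableSet_Ioo hd hinj
    (fun x => x ^ (a-1) * (1+x) ^ (-p))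
  rw [himg] at key
  rw [key]
  have hcong : ∀ t ∈ Ioo (0:ℝ) 1,
      |1/(1-t)^2| • ((t/(1-t)) ^ (a-1) * (1 + t/(1-t)) ^ (-p))
        = t ^ (a-1) * (1-t) ^ ((p-a)-1) := by
    intro t ht
    have ht0 : (0:ℝ) < t := ht.1
    have hu0 : (0:ℝ) < 1 - t := by linarith [ht.2]
    have e0 : (1:ℝ) + t/(1-t) = (1-t)⁻¹ := by field_simp; ring
    rw [smul_eq_mul, e0, Real.div_rpow ht0.le hu0.le,
      Real.inv_rpow hu0.le, ← Real.rpow_neg hu0.le, neg_neg,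
      abs_of_pos (by positivity : (0:ℝ) < 1/(1-t)^2)]
    rw [show (1:ℝ)/(1-t)^2 * (t^(a-1)/(1-t)^(a-1) * (1-t)^p)
        = t^(a-1) * ((1-t)^p / ((1-t)^(a-1) * (1-t)^(2:ℕ))) by
        have h2 : ((1:ℝ)-t)^(a-1) ≠ 0 := by positivity
        have h3 : ((1:ℝ)-t)^2 ≠ 0 := by positivity
        push_cast
        field_simp]
    congr 1
    rw [← Real.rpow_natCast (1-t) 2, ← Real.rpow_add hu0, ← Real.rpow_sub hu0]
    congr 1
    push_cast
    ring
  rw [setIntegral_congr_fun measurableSet_Ioo hcong, beta_real ha (by linarith : 0 < p - a)]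
  rw [show a + (p - a) = p by ring]

private lemma int_Ioi_pow_one_add_sq {a p : ℝ} (ha : 0 < a) (hap : a < p) :
    ∫ u in Ioi (0:ℝ), u ^ (2*a-1) * (1+u^2) ^ (-p) =
      Real.Gamma a * Real.Gamma (p-a) / Real.Gamma p / 2 := by
  have key := integral_comp_rpow_Ioi_of_pos
    (g := fun x : ℝ => (1/2) * (x ^ (a-1) * (1+x) ^ (-p))) (p := 2) two_pos
  have hcong : ∀ x ∈ Ioi (0:ℝ),
      ((2:ℝ) * x ^ ((2:ℝ)-1)) • ((1/2) * ((x ^ (2:ℝ)) ^ (a-1) * (1+x ^ (2:ℝ)) ^ (-p)))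
        = x ^ (2*a-1) * (1+x^2) ^ (-p) := by
    intro x hx
    have hx0 : (0:ℝ) < x := hx
    have h2 : x ^ (2:ℝ) = x^2 := by
      rw [← Real.rpow_natCast x 2]; norm_num
    have h3 : (x^2 : ℝ) ^ (a-1) = x ^ (2*a-2) := by
      rw [← h2, ← Real.rpow_mul hx0.le]
      congr 1; ring
    have h4 : x ^ (2*a-1) = x * x ^ (2*a-2) := by
      rw [show 2*a-1 = 1 + (2*a-2) by ring, Real.rpow_add hx0, Real.rpow_one]
    have h5 : x ^ ((2:ℝ)-1) = x := by norm_num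
    rw [smul_eq_mul, h2, h3, h4, h5]
    ring
  rw [setIntegral_congr_fun measurableSet_Ioi hcong] at key
  rw [key, integral_const_mul, beta_Ioi ha hap]
  ring

private lemma int_line_f0 {p : ℝ} (hp : 1/2 < p) :
    ∫ u : ℝ, (1+u^2) ^ (-p) =
      Real.sqrt π * Real.Gamma (p-1/2) / Real.Gamma p := by
  have h := int_Ioi_pow_one_add_sq (a := 1/2) (by norm_num) (by linarith : (1/2:ℝ) < p)
  have h0 : ∫ u in Ioi (0:ℝ), (1+u^2) ^ (-p)
      = Real.Gamma (1/2) * Real.Gamma (p-1/2) / Real.Gamma p / 2 := by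
    rw [← h]
    refine setIntegral_congr_fun measurableSet_Ioi fun x hx => ?_
    rw [show 2*(1/2:ℝ)-1 = 0 by norm_num, Real.rpow_zero, one_mul]
  have habs := integral_comp_abs (f := fun x : ℝ => (1+x^2) ^ (-p))
  simp only [sq_abs] at habs
  rw [habs, h0, Real.Gamma_one_half_eq]
  ring

private lemma int_line_f2 {p : ℝ} (hp : 3/2 < p) :
    ∫ u : ℝ, u^2 * (1+u^2) ^ (-p) =
      Real.sqrt π / 2 * Real.Gamma (p-3/2) / Real.Gamma p := by
  have h := int_Ioi_pow_one_add_sq (a := 3/2) (by norm_num) (by linarith : (3/2:ℝ) < p)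
  have h0 : ∫ u in Ioi (0:ℝ), u^2 * (1+u^2) ^ (-p)
      = Real.Gamma (3/2) * Real.Gamma (p-3/2) / Real.Gamma p / 2 := by
    rw [← h]
    refine setIntegral_congr_fun measurableSet_Ioi fun x hx => ?_
    rw [show 2*(3/2:ℝ)-1 = ((2:ℕ):ℝ) by norm_num, Real.rpow_natCast]
  have habs := integral_comp_abs (f := fun x : ℝ => x^2 * (1+x^2) ^ (-p))
  simp only [sq_abs] at habs
  rw [habs, h0]
  rw [show (3/2 : ℝ) = 1/2 + 1 by norm_num, Real.Gamma_add_one (by norm_num),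
    Real.Gamma_one_half_eq]
  ring

private lemma int_line_f1 {p : ℝ} : ∫ u : ℝ, u * (1+u^2) ^ (-p) = 0 := by
  have h : ∫ u : ℝ, (-u) * (1+(-u)^2) ^ (-p) = ∫ u : ℝ, u * (1+u^2) ^ (-p) :=
    integral_neg_eq_self (fun u : ℝ => u * (1+u^2) ^ (-p)) volume
  simp only [neg_sq, neg_mul, integral_neg] at h
  linarith

private lemma integrable_base {q : ℝ} (hq : 1/2 < q) :
    Integrable (fun u : ℝ => (1+u^2) ^ (-q)) := by
  have h := integrable_rpow_neg_one_add_norm_sq (E := ℝ) (μ := volume) (r := 2*q)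
    (by simp; linarith)
  have : ∀ u : ℝ, ((1:ℝ) + ‖u‖^2) ^ (-(2*q)/2) = (1+u^2) ^ (-q) := by
    intro u
    rw [Real.norm_eq_abs, sq_abs]
    congr 1
    ring
  have e : (-(2*q)/2) = -q := by ring
  rw [e] at h
  simpa using h

private lemma cont_base (q : ℝ) : Continuous (fun u : ℝ => (1+u^2) ^ (-q)) := by
  apply Continuous.rpow_const (by continuity)
  intro x
  left
  positivity

private lemma integrable_f1 {p : ℝ} (hp : 3/2 < p) :
    Integrable (fun u : ℝ => u * (1+u^2) ^ (-p)) := by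
  refine (integrable_base (q := p-1) (by linarith)).mono' ?_ ?_
  · exact (Continuous.mul continuous_id (cont_base p)).aestronglyMeasurable
  · filter_upwards with u
    have h1 : (0:ℝ) < 1 + u^2 := by positivity
    have h2 : |u| ≤ 1 + u^2 := by nlinarith [abs_nonneg u, sq_abs u, sq_nonneg (|u| - 1)]
    have h3 : ‖u * (1+u^2) ^ (-p)‖ = |u| * (1+u^2) ^ (-p) := by
      rw [norm_mul, Real.norm_eq_abs, Real.norm_eq_abs,
        abs_of_pos (Real.rpow_pos_of_pos h1 _)]
    rw [h3, show -(p-1) = 1 + -p by ring, Real.rpow_add h1, Real.rpow_one]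
    exact mul_le_mul_of_nonneg_right h2 (Real.rpow_pos_of_pos h1 _).le

private lemma integrable_f2 {p : ℝ} (hp : 3/2 < p) :
    Integrable (fun u : ℝ => u^2 * (1+u^2) ^ (-p)) := by
  refine (integrable_base (q := p-1) (by linarith)).mono' ?_ ?_
  · exact (Continuous.mul (by continuity) (cont_base p)).aestronglyMeasurable
  · filter_upwards with u
    have h1 : (0:ℝ) < 1 + u^2 := by positivity
    have h2 : u^2 ≤ 1 + u^2 := by nlinarith
    have h3 : ‖u^2 * (1+u^2) ^ (-p)‖ = u^2 * (1+u^2) ^ (-p) := by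
      rw [norm_mul, Real.norm_eq_abs, Real.norm_eq_abs, abs_sq,
        abs_of_pos (Real.rpow_pos_of_pos h1 _)]
    rw [h3, show -(p-1) = 1 + -p by ring, Real.rpow_add h1, Real.rpow_one]
    exact mul_le_mul_of_nonneg_right h2 (Real.rpow_pos_of_pos h1 _).le


set_option maxHeartbeats 1000000 in
/-- the cross-entropy of a location-scale Student-t density relative to a
Gaussian goal prior. -/
theorem studentT_gaussian_cross_entropy (ν s2 vstar m mstar : ℝ)
    (hν : 2 < ν) (hs2 : 0 < s2) (hv : 0 < vstar) :
    ∫ y : ℝ, studentT y ν m s2 * (-Real.log (gauss1 y mstar vstar)) =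
      (1 / 2) * Real.log (2 * π * vstar) +
        (1 / (2 * vstar)) * ((m - mstar) ^ 2 + s2 * ν / (ν - 2)) := by
  have hπ : (0:ℝ) < π := pi_pos
  set p : ℝ := (ν + 1) / 2 with hp_def
  have hp : 3/2 < p := by rw [hp_def]; linarith
  have hνs2 : (0:ℝ) < ν * s2 := by positivity
  set a : ℝ := Real.sqrt (ν * s2) with ha_def
  have ha : 0 < a := Real.sqrt_pos.mpr hνs2
  have ha2 : a ^ 2 = ν * s2 := Real.sq_sqrt hνs2.le
  set K : ℝ := Real.Gamma p / (Real.sqrt (π * ν * s2) * Real.Gamma (ν / 2)) with hK_def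
  set A : ℝ := (1/2) * Real.log (2 * π * vstar) + (m - mstar)^2 / (2 * vstar) with hA_def
  set B : ℝ := a * (m - mstar) / vstar with hB_def
  set C : ℝ := a^2 / (2 * vstar) with hC_def
  set F : ℝ → ℝ := fun y => studentT y ν m s2 * (-Real.log (gauss1 y mstar vstar)) with hF_def
  -- pointwise identity
  have hpt : ∀ u : ℝ, F (a * u + m) =
      (K * A) * (1 + u^2) ^ (-p) + (K * B) * (u * (1 + u^2) ^ (-p))
        + (K * C) * (u^2 * (1 + u^2) ^ (-p)) := by
    intro u
    have h2πv : (0:ℝ) < 2 * π * vstar := by positivity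
    have hlog : -Real.log (gauss1 (a * u + m) mstar vstar)
        = A + B * u + C * u^2 := by
      rw [gauss1]
      rw [Real.log_mul (by positivity : (2 * π * vstar) ^ (-(1:ℝ)/2) ≠ 0)
        (Real.exp_ne_zero _), Real.log_rpow h2πv, Real.log_exp]
      rw [hA_def, hB_def, hC_def]
      have hv' : vstar ≠ 0 := hv.ne'
      field_simp
      ring
    have hst : studentT (a * u + m) ν m s2 = K * (1 + u^2) ^ (-p) := by
      rw [studentT, hK_def]
      congr 2
      rw [show a * u + m - m = a * u by ring, mul_pow, ha2]
      field_simp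
    rw [hF_def]
    simp only
    rw [hst, hlog]
    ring
  -- substitution
  have step1 : ∫ y : ℝ, F y = |a| * ∫ u : ℝ, F (a * u + m) := by
    have h1 : ∫ y : ℝ, F y = ∫ x : ℝ, F (x + m) := (integral_add_right_eq_self F m).symm
    have h2 : ∫ u : ℝ, (fun x => F (x + m)) (a * u) = |a⁻¹| • ∫ x : ℝ, F (x + m) :=
      Measure.integral_comp_mul_left (fun x => F (x + m)) a
    simp only [smul_eq_mul] at h2
    rw [h1, h2, abs_inv]
    field_simp
  rw [step1]
  have i0 : Integrable (fun u : ℝ => (K*A) * (1+u^2) ^ (-p)) :=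
    (integrable_base (q := p) (by linarith)).const_mul _
  have i1 : Integrable (fun u : ℝ => (K*B) * (u * (1+u^2) ^ (-p))) :=
    (integrable_f1 hp).const_mul _
  have i2 : Integrable (fun u : ℝ => (K*C) * (u^2 * (1+u^2) ^ (-p))) :=
    (integrable_f2 hp).const_mul _
  have i01 : Integrable (fun u : ℝ => (K*A) * (1+u^2) ^ (-p)
      + (K*B) * (u * (1+u^2) ^ (-p))) := i0.add i1
  have step2 : ∫ u : ℝ, F (a * u + m) =
      (K * A) * (∫ u : ℝ, (1 + u^2) ^ (-p)) + (K * B) * (∫ u : ℝ, u * (1 + u^2) ^ (-p))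
        + (K * C) * (∫ u : ℝ, u^2 * (1 + u^2) ^ (-p)) := by
    rw [show (fun u : ℝ => F (a * u + m)) = fun u : ℝ =>
        ((K * A) * (1 + u^2) ^ (-p) + (K * B) * (u * (1 + u^2) ^ (-p)))
          + (K * C) * (u^2 * (1 + u^2) ^ (-p)) from funext hpt]
    rw [integral_add i01 i2, integral_add i0 i1,
      integral_const_mul, integral_const_mul, integral_const_mul]
  rw [step2, int_line_f0 (by linarith), int_line_f1, int_line_f2 hp]
  -- final algebra
  have hν2 : ν - 2 ≠ 0 := by intro h; linarith
  have hν2' : ν/2 - 1 ≠ 0 := by intro h; apply hν2; linarith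
  have hG2 : Real.Gamma (ν/2) = (ν/2 - 1) * Real.Gamma (ν/2 - 1) := by
    have := Real.Gamma_add_one (s := ν/2 - 1) hν2'
    rw [show ν/2 - 1 + 1 = ν/2 by ring] at this
    exact this
  have e0 : p - 1/2 = ν/2 := by rw [hp_def]; ring
  have e2 : p - 3/2 = ν/2 - 1 := by rw [hp_def]; ring
  rw [e0, e2, abs_of_pos ha]
  have hsq : Real.sqrt (π * ν * s2) = Real.sqrt π * a := by
    rw [ha_def, ← Real.sqrt_mul hπ.le, mul_assoc]
  have hGp : (0:ℝ) < Real.Gamma p := Real.Gamma_pos_of_pos (by linarith)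
  have hG1 : (0:ℝ) < Real.Gamma (ν/2 - 1) := Real.Gamma_pos_of_pos (by linarith)
  have hGν2 : (0:ℝ) < Real.Gamma (ν/2) := Real.Gamma_pos_of_pos (by linarith)
  have hsπ : (0:ℝ) < Real.sqrt π := Real.sqrt_pos.mpr hπ
  have hKA : a * (K * A * (Real.sqrt π * Real.Gamma (ν/2) / Real.Gamma p)) = A := by
    rw [hK_def, hsq]
    field_simp
  have hKC : a * (K * C * (Real.sqrt π / 2 * Real.Gamma (ν/2-1) / Real.Gamma p))
      = C / (ν-2) := by
    rw [hK_def, hsq, hG2, show (ν-2:ℝ) = 2*(ν/2-1) by ring]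
    set w : ℝ := ν/2 - 1 with hw_def
    field_simp [ha.ne', hsπ.ne', hGp.ne', hG1.ne', hν2']
  calc a * ((K * A * (Real.sqrt π * Real.Gamma (ν/2) / Real.Gamma p) + K * B * 0)
        + K * C * (Real.sqrt π / 2 * Real.Gamma (ν/2-1) / Real.Gamma p))
      = a * (K * A * (Real.sqrt π * Real.Gamma (ν/2) / Real.Gamma p))
        + a * (K * C * (Real.sqrt π / 2 * Real.Gamma (ν/2-1) / Real.Gamma p)) := by ring
    _ = A + C / (ν-2) := by rw [hKA, hKC]
    _ = (1 / 2) * Real.log (2 * π * vstar) +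
        (1 / (2 * vstar)) * ((m - mstar) ^ 2 + s2 * ν / (ν - 2)) := by
      rw [hA_def, hC_def, ha2]
      field_simp
      ring
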